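/- arXiv:2512.07008 — 2 statements merged into one kernel-verified Lean document; each statement's English description precedes it below -/
import Mathlib

section
/- For every Catalan word π of length n, the semi-perimeter of its bargraph equals n + 1 + asc(π), where asc(π) is the number of ascents of π. -/
def IsCatalanWord (w : List ℕ) : Prop :=
  (∀ x ∈ w, 0 < x) ∧ (0 < w.length → w.getD 0 0 = 1) ∧
    ∀ i, i + 1 < w.length → w.getD (i + 1) 0 ≤ w.getD i 0 + 1

/-- The perimeter of the bargraph of a word: 2·(length) horizontal edge length
(bottom plus top) plus the vertical edge lengths: the first column height, the
last column height, and the absolute differences of consecutive heights. -/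
def bargraphPerimeter (w : List ℕ) : ℕ :=
  2 * w.length + w.getD 0 0 + w.getD (w.length - 1) 0 +
    ∑ i ∈ Finset.range (w.length - 1), Nat.dist (w.getD i 0) (w.getD (i + 1) 0)

lemma telescope (g : ℕ → ℕ) (m : ℕ) :
    (∑ i ∈ Finset.range m, (g i - g (i + 1))) + g m =
      (∑ i ∈ Finset.range m, (g (i + 1) - g i)) + g 0 := by
  induction m with
  | zero => simp
  | succ m ih =>
    rw [Finset.sum_range_succ, Finset.sum_range_succ]
    have h : (g m - g (m + 1)) + g (m + 1) = (g (m + 1) - g m) + g m := by omega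
    omega

/-- The semi-perimeter of the bargraph of a Catalan word of length n ≥ 1 equals
n + 1 plus its number of ascents. -/
theorem semiperimeter_eq (n : ℕ) (hn : 1 ≤ n) (w : List ℕ)
    (hw : IsCatalanWord w) (hl : w.length = n) :
    bargraphPerimeter w / 2 =
      n + 1 + Nat.card {i : ℕ // i + 1 < n ∧ w.getD i 0 < w.getD (i + 1) 0} := by
  obtain ⟨m, rfl⟩ : ∃ m, n = m + 1 := ⟨n - 1, by omega⟩
  set g : ℕ → ℕ := fun i => w.getD i 0 with hg
  obtain ⟨hpos, hfirst, hstep⟩ := hw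
  have hg0 : g 0 = 1 := hfirst (by omega)
  set A : Finset ℕ := (Finset.range m).filter (fun i => g i < g (i + 1)) with hA
  have hcard : Nat.card {i : ℕ // i + 1 < m + 1 ∧ g i < g (i + 1)} = A.card := by
    rw [← Set.ncard_coe_finset A, ← Nat.card_coe_set_eq]
    apply Nat.card_congr
    apply Equiv.subtypeEquivRight
    intro i
    simp only [hA, Finset.coe_filter, Set.mem_setOf_eq, Finset.mem_range]
    omega
  -- sum of positive differences equals number of ascents
  have hup : (∑ i ∈ Finset.range m, (g (i + 1) - g i)) = A.card := by
    rw [hA, Finset.card_filter]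
    apply Finset.sum_congr rfl
    intro i hi
    rw [Finset.mem_range] at hi
    have h2 : g (i + 1) ≤ g i + 1 := hstep i (by omega)
    by_cases h : g i < g (i + 1) <;> simp [h] <;> omega
  have htel := telescope g m
  have hdist : (∑ i ∈ Finset.range m, Nat.dist (g i) (g (i + 1))) =
      (∑ i ∈ Finset.range m, (g i - g (i + 1))) +
        (∑ i ∈ Finset.range m, (g (i + 1) - g i)) := by
    rw [← Finset.sum_add_distrib]
    apply Finset.sum_congr rfl
    intro i _
    simp [Nat.dist]
  have hper : bargraphPerimeter w = 2 * ((m + 1) + 1 + A.card) := by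
    unfold bargraphPerimeter
    rw [hl]
    simp only [Nat.add_sub_cancel]
    change 2 * (m + 1) + g 0 + g m + (∑ i ∈ Finset.range m, Nat.dist (g i) (g (i + 1))) = _
    omega
  rw [hper, hcard, Nat.mul_div_cancel_left _ (by norm_num)]
end

section
/- For n ≥ 1, the sum over all Catalan words π of length n of (π_1 + π_2 + ... + π_n) equals (1/2)·(4^n − C(2n,n)). -/
open Finset Nat

def glue (u v : List ℕ) : List ℕ := 1 :: (u.map (· + 1) ++ v)

def IsCat (w : List ℕ) : Prop :=
  (∀ x ∈ w, 0 < x) ∧ (∀ (h : w ≠ []), w.head h = 1) ∧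
      List.IsChain (fun a b => b ≤ a + 1) w

lemma isCat_iff (w : List ℕ) : IsCatalanWord w ↔ IsCat w := by
  unfold IsCatalanWord IsCat
  constructor
  · rintro ⟨h1, h2, h3⟩
    refine ⟨h1, ?_, ?_⟩
    · intro h
      have hl : 0 < w.length := List.length_pos_iff.mpr h
      have := h2 hl
      rwa [List.getD_eq_getElem _ _ hl, ← List.head_eq_getElem] at this
    · rw [List.isChain_iff_getElem]
      intro i hi
      have hi1 : i + 1 < w.length := by omega
      have := h3 i hi1
      rwa [List.getD_eq_getElem _ _ hi1, List.getD_eq_getElem _ _ (by omega)] at this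
  · rintro ⟨h1, h2, h3⟩
    refine ⟨h1, ?_, ?_⟩
    · intro hl
      have h : w ≠ [] := List.length_pos_iff.mp hl
      rw [List.getD_eq_getElem _ _ hl, ← List.head_eq_getElem]
      exact h2 h
    · intro i hi1
      rw [List.isChain_iff_getElem] at h3
      have := h3 i (by omega)
      rw [List.getD_eq_getElem _ _ hi1, List.getD_eq_getElem _ _ (by omega)]
      simpa using this

lemma head?_eq_one {v : List ℕ} (hv : ∀ (h : v ≠ []), v.head h = 1) :
    ∀ y ∈ v.head?, y = 1 := by
  intro y hy
  cases v with
  | nil => simp at hy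
  | cons a l => simp at hy; subst hy; exact hv (by simp)

lemma isCat_glue {u v : List ℕ} (hu : IsCat u) (hv : IsCat v) : IsCat (glue u v) := by
  obtain ⟨hu1, hu2, hu3⟩ := hu
  obtain ⟨hv1, hv2, hv3⟩ := hv
  refine ⟨?_, ?_, ?_⟩
  · intro x hx
    simp [glue] at hx
    rcases hx with h | ⟨a, _, rfl⟩ | h
    · omega
    · omega
    · exact hv1 x h
  · intro _; rfl
  · rw [glue, List.isChain_cons]
    constructor
    · intro b hb
      cases u with
      | nil =>
        simp at hb
        have := head?_eq_one hv2 b hb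
        omega
      | cons a u' =>
        simp at hb
        have : a = 1 := hu2 (by simp)
        omega
    · rw [List.isChain_append]
      refine ⟨?_, hv3, ?_⟩
      · rw [List.isChain_map]
        exact hu3.imp (fun a b h => by omega)
      · intro x hx y hy
        have := head?_eq_one hv2 y hy
        omega

lemma isCat_decomp {w : List ℕ} (hw : IsCat w) (hne : w ≠ []) :
    ∃ u v : List ℕ, IsCat u ∧ IsCat v ∧ w = glue u v ∧
      u.length + v.length + 1 = w.length := by
  obtain ⟨h1, h2, h3⟩ := hw
  obtain ⟨t, rfl⟩ : ∃ t, w = 1 :: t := by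
    cases w with
    | nil => exact absurd rfl hne
    | cons a t =>
      have := h2 (by simp)
      simp at this
      exact ⟨t, by rw [this]⟩
  clear hne
  set p : ℕ → Bool := fun x => decide (1 < x) with hp
  set tk := t.takeWhile p with htk
  set dr := t.dropWhile p with hdr
  have htd : tk ++ dr = t := List.takeWhile_append_dropWhile (p := p) (l := t)
  have htkmem : ∀ x ∈ tk, 1 < x := by
    intro x hx
    have := List.mem_takeWhile_imp hx
    simpa [hp] using this
  have hchain_t : List.IsChain (fun a b => b ≤ a + 1) t := h3.tail
  have htsub : ∀ x ∈ dr, x ∈ t := (List.dropWhile_suffix p).subset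
  have hmapid : (tk.map (· - 1)).map (· + 1) = tk := by
    rw [List.map_map]
    have h : ∀ x ∈ tk, ((· + 1) ∘ (· - 1)) x = id x := by
      intro x hx
      have := htkmem x hx
      simp
      omega
    rw [List.map_congr_left h, List.map_id]
  refine ⟨tk.map (· - 1), dr, ⟨?_, ?_, ?_⟩, ⟨?_, ?_, ?_⟩, ?_, ?_⟩
  · intro x hx
    simp at hx
    obtain ⟨a, ha, rfl⟩ := hx
    have := htkmem a ha
    omega
  · intro h
    have htkne : tk ≠ [] := by simpa using h
    rw [List.head_map]
    have hle2 : tk.head htkne ≤ 2 := by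
      have key : ∀ y, tk.head? = some y → y ≤ 2 := by
        intro y hh
        cases t with
        | nil => simp [htk] at htkne
        | cons b t' =>
          have hb : b ≤ 2 := by
            rw [List.isChain_cons] at h3
            exact h3.1 b (by simp)
          rw [htk, List.takeWhile_cons] at hh
          by_cases hpb : p b = true
          · rw [if_pos hpb] at hh
            simp at hh
            omega
          · rw [if_neg (by simpa using hpb)] at hh
            simp at hh
      exact key _ (List.head?_eq_head htkne)
    have := htkmem _ (List.head_mem htkne)
    omega
  · rw [List.isChain_map]
    exact (hchain_t.prefix (List.takeWhile_prefix p)).imp (fun a b h => by omega)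
  · intro x hx
    exact h1 x (by simp; right; exact htsub x hx)
  · intro h
    have hd : p (dr.head h) = false := List.head_dropWhile_not p (l := t) (by rwa [← hdr])
    have hpos := h1 (dr.head h) (by simp; right; exact htsub _ (List.head_mem h))
    simp only [hp] at hd
    simp at hd
    omega
  · exact hchain_t.suffix (List.dropWhile_suffix p)
  · rw [glue, hmapid, htd]
  · simp [← htd]

lemma glue_inj {u v u' v' : List ℕ} (h : glue u v = glue u' v')
    (hl : u.length = u'.length) : u = u' ∧ v = v' := by
  simp only [glue, List.cons.injEq, true_and] at h
  have hlm : (u.map (· + 1)).length = (u'.map (· + 1)).length := by simpa using hl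
  obtain ⟨h1, h2⟩ := List.append_inj h hlm
  refine ⟨?_, h2⟩
  have : Function.Injective (fun x : ℕ => x + 1) := fun x y h => by simpa using h
  exact List.map_injective_iff.mpr this h1

lemma glue_ne {u v u' v' : List ℕ} (hv1 : ∀ x ∈ v, 0 < x)
    (hv2 : ∀ (h : v ≠ []), v.head h = 1) (hvne : v ≠ [])
    (hu' : ∀ x ∈ u', 0 < x) (hlt : u.length < u'.length) :
    glue u v ≠ glue u' v' := by
  intro h
  set a := u.length with ha
  have e : (glue u v)[a+1]? = (glue u' v')[a+1]? := by rw [h]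
  have lhs : (glue u v)[a+1]? = some 1 := by
    rw [glue]
    rw [List.getElem?_cons_succ]
    rw [List.getElem?_append_right (by simp [ha])]
    simp [ha]
    cases v with
    | nil => exact absurd rfl hvne
    | cons b l =>
      have := hv2 (by simp)
      simp at this
      simp [this]
  have rhs : ∃ x ∈ u', (glue u' v')[a+1]? = some (x + 1) := by
    rw [glue, List.getElem?_cons_succ]
    rw [List.getElem?_append, if_pos (by simpa using hlt)]
    rw [List.getElem?_map]
    have hb : a < u'.length := hlt
    refine ⟨u'[a], List.getElem_mem hb, ?_⟩
    simp [List.getElem?_eq_getElem hb]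
  obtain ⟨x, hx, hrhs⟩ := rhs
  rw [e, hrhs] at lhs
  have := hu' x hx
  simp at lhs
  omega

def catW : ℕ → Finset (List ℕ)
  | 0 => {[]}
  | (n+1) => (Finset.range (n+1)).attach.biUnion fun a =>
      ((catW a.1) ×ˢ (catW (n - a.1))).image fun q => glue q.1 q.2
  decreasing_by
  · exact Nat.lt_succ_of_le (Nat.le_of_lt_succ (Finset.mem_range.mp a.2))
  · exact Nat.lt_succ_of_le (Nat.sub_le _ _)

lemma glue_length (u v : List ℕ) : (glue u v).length = u.length + v.length + 1 := by
  simp [glue]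

lemma mem_catW (n : ℕ) (w : List ℕ) : w ∈ catW n ↔ IsCat w ∧ w.length = n := by
  induction n using Nat.strong_induction_on generalizing w with
  | _ n ih =>
    match n with
    | 0 =>
      simp only [catW, Finset.mem_singleton]
      constructor
      · rintro rfl
        exact ⟨⟨by simp, by simp, List.IsChain.nil⟩, rfl⟩
      · rintro ⟨-, hl⟩
        exact List.length_eq_zero_iff.mp hl
    | (m+1) =>
      rw [catW]
      simp only [Finset.mem_biUnion, Finset.mem_image, Finset.mem_product, Finset.mem_attach]
      constructor
      · rintro ⟨⟨a, ha⟩, -, ⟨u, v⟩, ⟨hu, hv⟩, rfl⟩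
        have ha' : a < m + 1 := Finset.mem_range.mp ha
        obtain ⟨hcu, hlu⟩ := (ih a (by omega) u).mp hu
        obtain ⟨hcv, hlv⟩ := (ih (m - a) (by omega) v).mp hv
        refine ⟨isCat_glue hcu hcv, ?_⟩
        rw [glue_length, hlu, hlv]
        omega
      · rintro ⟨hw, hl⟩
        have hne : w ≠ [] := by
          intro h; rw [h] at hl; simp at hl
        obtain ⟨u, v, hcu, hcv, rfl, hlen⟩ := isCat_decomp hw hne
        rw [hl] at hlen
        have hau : u.length < m + 1 := by omega
        refine ⟨⟨u.length, Finset.mem_range.mpr hau⟩, trivial, ⟨u, v⟩,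
          ⟨?_, ?_⟩, rfl⟩
        · exact (ih u.length (by omega) u).mpr ⟨hcu, rfl⟩
        · exact (ih (m - u.length) (by omega) v).mpr ⟨hcv, by omega⟩

lemma length_of_mem_catW {n w} (h : w ∈ catW n) : w.length = n := ((mem_catW n w).mp h).2

lemma catW_transfer (n : ℕ) (f : List ℕ → ℕ) :
    ∑ w ∈ catW (n+1), f w =
      ∑ a ∈ Finset.range (n+1), ∑ u ∈ catW a, ∑ v ∈ catW (n-a), f (glue u v) := by
  rw [catW]
  rw [Finset.sum_biUnion]
  · rw [← Finset.sum_attach (Finset.range (n+1)) (fun a => ∑ u ∈ catW a, ∑ v ∈ catW (n-a), f (glue u v))]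
    refine Finset.sum_congr rfl fun a _ => ?_
    rw [Finset.sum_image, Finset.sum_product]
    rintro ⟨u, v⟩ hq ⟨u', v'⟩ hq' hg
    simp only [Finset.mem_coe, Finset.mem_product] at hq hq'
    have hl : u.length = u'.length := by
      rw [length_of_mem_catW hq.1, length_of_mem_catW hq'.1]
    obtain ⟨h1, h2⟩ := glue_inj hg hl
    exact Prod.ext h1 h2
  · rintro ⟨a, ha⟩ - ⟨a', ha'⟩ - hne
    have hane : a ≠ a' := by simpa using hne
    simp only [Finset.disjoint_left]
    intro w hw hw'
    simp only [Finset.mem_image, Finset.mem_product, Prod.exists] at hw hw'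
    obtain ⟨u, v, ⟨hu, hv⟩, rfl⟩ := hw
    obtain ⟨u', v', ⟨hu', hv'⟩, hg⟩ := hw'
    have ha1 := Finset.mem_range.mp ha
    have ha2 := Finset.mem_range.mp ha'
    obtain ⟨hcu, hlu⟩ := (mem_catW _ _).mp hu
    obtain ⟨hcv, hlv⟩ := (mem_catW _ _).mp hv
    obtain ⟨hcu', hlu'⟩ := (mem_catW _ _).mp hu'
    obtain ⟨hcv', hlv'⟩ := (mem_catW _ _).mp hv'
    rcases Nat.lt_or_ge a a' with h | h
    · refine glue_ne hcv.1 hcv.2.1 ?_ hcu'.1 (by omega) hg.symm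
      intro hv0
      rw [hv0] at hlv
      simp at hlv
      omega
    · have h' : a' < a := by omega
      refine glue_ne hcv'.1 hcv'.2.1 ?_ hcu.1 (by omega) hg
      intro hv0
      rw [hv0] at hlv'
      simp at hlv'
      omega

lemma sum_map_succ (u : List ℕ) : (u.map (· + 1)).sum = u.sum + u.length := by
  induction u with
  | nil => simp
  | cons a l ih => simp [ih]; omega

lemma glue_sum (u v : List ℕ) : (glue u v).sum = 1 + u.length + u.sum + v.sum := by
  simp [glue, sum_map_succ]
  omega

lemma card_catW : ∀ n, (catW n).card = catalan n := by
  intro n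
  induction n using Nat.strong_induction_on with
  | _ n ih =>
    match n with
    | 0 => simp [catW]
    | (m+1) =>
      have : (catW (m+1)).card = ∑ w ∈ catW (m+1), 1 := by simp
      rw [this, catW_transfer, catalan_succ', Finset.Nat.sum_antidiagonal_eq_sum_range_succ_mk]
      refine Finset.sum_congr rfl fun a ha => ?_
      have ha' := Finset.mem_range.mp ha
      rw [← ih a ha', ← ih (m - a) (by omega)]
      simp [Finset.sum_const, smul_eq_mul]

def Fc (n : ℕ) : ℕ := ∑ w ∈ catW n, w.sum

lemma Fc_zero : Fc 0 = 0 := by simp [Fc, catW]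

lemma catalan_conv (n : ℕ) :
    ∑ a ∈ Finset.range (n+1), catalan a * catalan (n-a) = catalan (n+1) := by
  rw [catalan_succ', Finset.Nat.sum_antidiagonal_eq_sum_range_succ_mk]

lemma Fc_succ (n : ℕ) : Fc (n+1) = ∑ a ∈ Finset.range (n+1),
    ((1 + a) * (catalan a * catalan (n-a)) + Fc a * catalan (n-a) + catalan a * Fc (n-a)) := by
  rw [Fc, catW_transfer]
  refine Finset.sum_congr rfl fun a ha => ?_
  calc ∑ u ∈ catW a, ∑ v ∈ catW (n-a), (glue u v).sum
      = ∑ u ∈ catW a, ∑ v ∈ catW (n-a), ((1 + a) + u.sum + v.sum) := by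
        refine Finset.sum_congr rfl fun u hu => Finset.sum_congr rfl fun v hv => ?_
        rw [glue_sum, length_of_mem_catW hu]
    _ = (1 + a) * (catalan a * catalan (n-a)) + Fc a * catalan (n-a)
          + catalan a * Fc (n-a) := by
        simp only [Finset.sum_add_distrib, Finset.sum_const, smul_eq_mul,
          ← Finset.sum_mul, Finset.mul_sum]
        simp only [← Finset.mul_sum]
        rw [← card_catW a, ← card_catW (n-a), Fc, Fc]
        ring

lemma cb_succ_q (n : ℕ) : (centralBinom (n+1) : ℚ) = 4 * centralBinom n - 2 * catalan n := by
  have h1 := Nat.succ_mul_centralBinom_succ n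
  have h2 := succ_mul_catalan_eq_centralBinom n
  have hcast1 : ((n:ℚ)+1) * (centralBinom (n+1) : ℚ) = 2*(2*n+1) * centralBinom n := by
    exact_mod_cast congrArg (Nat.cast : ℕ → ℚ) h1
  have hcast2 : ((n:ℚ)+1) * (catalan n : ℚ) = centralBinom n := by
    exact_mod_cast congrArg (Nat.cast : ℕ → ℚ) h2
  have hne : ((n:ℚ)+1) ≠ 0 := by positivity
  apply mul_left_cancel₀ hne
  rw [hcast1]
  linear_combination (2 : ℚ) * hcast2

lemma s1_eq (n : ℕ) :
    2 * (∑ a ∈ Finset.range (n+1), (centralBinom a : ℚ) * catalan (n-a)) = centralBinom (n+1) := by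
  induction n with
  | zero => have h1 : centralBinom 1 = 2 := rfl
            simp [Nat.centralBinom_zero, h1]
  | succ n ih =>
    rw [Finset.sum_range_succ']
    have hre : ∀ a ∈ Finset.range (n+1), (centralBinom (a+1) : ℚ) * catalan (n+1-(a+1)) =
        4 * (centralBinom a * catalan (n-a)) - 2 * (catalan a * catalan (n-a)) := by
      intro a ha
      have : n + 1 - (a+1) = n - a := by omega
      rw [this, cb_succ_q]
      ring
    rw [Finset.sum_congr rfl hre, Finset.sum_sub_distrib, ← Finset.mul_sum, ← Finset.mul_sum]
    have hc : (∑ a ∈ Finset.range (n+1), (catalan a : ℚ) * catalan (n-a)) = catalan (n+1) := by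
      exact_mod_cast congrArg (Nat.cast : ℕ → ℚ) (catalan_conv n)
    rw [hc, cb_succ_q (n+1)]
    simp only [Nat.centralBinom_zero, Nat.cast_one, one_mul, Nat.sub_zero]
    linarith [ih]

lemma s2_eq (n : ℕ) :
    2 * (∑ a ∈ Finset.range (n+1), (4:ℚ)^a * catalan (n-a)) = 4^(n+1) - centralBinom (n+1) := by
  induction n with
  | zero => have h1 : centralBinom 1 = 2 := rfl
            simp [h1]
            norm_num
  | succ n ih =>
    rw [Finset.sum_range_succ']
    have hre : ∀ a ∈ Finset.range (n+1), (4:ℚ)^(a+1) * catalan (n+1-(a+1)) =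
        4 * ((4:ℚ)^a * catalan (n-a)) := by
      intro a ha
      have : n + 1 - (a+1) = n - a := by omega
      rw [this]; ring
    rw [Finset.sum_congr rfl hre, ← Finset.mul_sum]
    rw [cb_succ_q (n+1)]
    simp only [pow_zero, one_mul, Nat.sub_zero]
    have hp : (4:ℚ)^(n+1+1) = 4 * 4^(n+1) := by ring
    linarith [ih, hp]

lemma catalan_cb_q (n : ℕ) : ((n:ℚ)+2) * catalan (n+1) = centralBinom (n+1) := by
  have := succ_mul_catalan_eq_centralBinom (n+1)
  have h : ((n+1+1 : ℕ) : ℚ) * catalan (n+1) = centralBinom (n+1) := by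
    exact_mod_cast congrArg (Nat.cast : ℕ → ℚ) this
  push_cast at h
  linarith [h]

lemma Fc_formula : ∀ n, (Fc n : ℚ) = (4^n - centralBinom n) / 2 := by
  intro n
  induction n using Nat.strong_induction_on with
  | _ n ih =>
    match n with
    | 0 => simp [Fc_zero, Nat.centralBinom_zero]
    | (m+1) =>
      have hrec : (Fc (m+1) : ℚ) = ∑ a ∈ Finset.range (m+1),
          ((1 + (a:ℚ)) * (catalan a * catalan (m-a)) + Fc a * catalan (m-a)
            + catalan a * Fc (m-a)) := by
        rw [Fc_succ]
        push_cast
        rfl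
      have hsplit : (Fc (m+1) : ℚ) =
          (∑ a ∈ Finset.range (m+1), (1 + (a:ℚ)) * (catalan a * catalan (m-a)))
          + (∑ a ∈ Finset.range (m+1), (Fc a : ℚ) * catalan (m-a))
          + (∑ a ∈ Finset.range (m+1), (catalan a : ℚ) * Fc (m-a)) := by
        rw [hrec, ← Finset.sum_add_distrib, ← Finset.sum_add_distrib]
      -- abbreviations
      set s1 : ℚ := ∑ a ∈ Finset.range (m+1), (centralBinom a : ℚ) * catalan (m-a) with hs1
      set s2 : ℚ := ∑ a ∈ Finset.range (m+1), (4:ℚ)^a * catalan (m-a) with hs2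
      set E : ℚ := ∑ a ∈ Finset.range (m+1), (a:ℚ) * (catalan a * catalan (m-a)) with hE
      -- first sum
      have hA : (∑ a ∈ Finset.range (m+1), (1 + (a:ℚ)) * (catalan a * catalan (m-a)))
          = catalan (m+1) + E := by
        have : ∀ a ∈ Finset.range (m+1), (1 + (a:ℚ)) * (catalan a * catalan (m-a))
            = (catalan a : ℚ) * catalan (m-a) + (a:ℚ) * (catalan a * catalan (m-a)) := by
          intro a _; ring
        rw [Finset.sum_congr rfl this, Finset.sum_add_distrib, hE]
        congr 1
        exact_mod_cast congrArg (Nat.cast : ℕ → ℚ) (catalan_conv m)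
      -- second sum
      have hB : (∑ a ∈ Finset.range (m+1), (Fc a : ℚ) * catalan (m-a)) = (s2 - s1)/2 := by
        have : ∀ a ∈ Finset.range (m+1), (Fc a : ℚ) * catalan (m-a)
            = ((4:ℚ)^a * catalan (m-a) - (centralBinom a : ℚ) * catalan (m-a))/2 := by
          intro a ha
          rw [ih a (by have := Finset.mem_range.mp ha; omega)]
          ring
        rw [Finset.sum_congr rfl this]
        rw [hs1, hs2, ← Finset.sum_div, Finset.sum_sub_distrib]
      -- third sum
      have hC : (∑ a ∈ Finset.range (m+1), (catalan a : ℚ) * Fc (m-a)) = (s2 - s1)/2 := by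
        have hrefl := Finset.sum_range_reflect
          (fun a => (catalan (m-a) : ℚ) * (Fc a : ℚ)) (m+1)
        have h1 : (∑ a ∈ Finset.range (m+1), (catalan a : ℚ) * Fc (m-a))
            = ∑ a ∈ Finset.range (m+1), (catalan (m-a) : ℚ) * Fc a := by
          rw [← hrefl]
          refine Finset.sum_congr rfl fun a ha => ?_
          have h := Finset.mem_range.mp ha
          have e1 : m + 1 - 1 - a = m - a := by omega
          have e2 : m - (m - a) = a := by omega
          rw [e1, e2]
        rw [h1]
        have h2 : ∀ a ∈ Finset.range (m+1), (catalan (m-a) : ℚ) * Fc a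
            = ((4:ℚ)^a * catalan (m-a) - (centralBinom a : ℚ) * catalan (m-a))/2 := by
          intro a ha
          rw [ih a (by have := Finset.mem_range.mp ha; omega)]
          ring
        rw [Finset.sum_congr rfl h2]
        rw [hs1, hs2, ← Finset.sum_div, Finset.sum_sub_distrib]
      -- E symmetric
      have hEE : E + E = (m:ℚ) * catalan (m+1) := by
        have hrefl := Finset.sum_range_reflect
          (fun a => (a:ℚ) * ((catalan a : ℚ) * catalan (m-a))) (m+1)
        have h1 : E = ∑ a ∈ Finset.range (m+1),
            (((m-a : ℕ)):ℚ) * ((catalan (m-a) : ℚ) * catalan a) := by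
          rw [hE, ← hrefl]
          refine Finset.sum_congr rfl fun a ha => ?_
          have h := Finset.mem_range.mp ha
          have e1 : m + 1 - 1 - a = m - a := by omega
          have e2 : m - (m - a) = a := by omega
          rw [e1, e2]
        nth_rewrite 2 [h1]
        rw [hE, ← Finset.sum_add_distrib]
        have h2 : ∀ a ∈ Finset.range (m+1),
            (a:ℚ) * ((catalan a : ℚ) * catalan (m-a))
              + (((m-a : ℕ)):ℚ) * ((catalan (m-a) : ℚ) * catalan a)
            = (m:ℚ) * ((catalan a : ℚ) * catalan (m-a)) := by
          intro a ha
          have h := Finset.mem_range.mp ha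
          rw [Nat.cast_sub (by omega)]
          ring
        rw [Finset.sum_congr rfl h2, ← Finset.mul_sum]
        have hc : (∑ a ∈ Finset.range (m+1), (catalan a : ℚ) * catalan (m-a))
            = catalan (m+1) := by
          exact_mod_cast congrArg (Nat.cast : ℕ → ℚ) (catalan_conv m)
        rw [hc]
      have k1 := s1_eq m
      have k2 := s2_eq m
      have k3 := catalan_cb_q m
      rw [hA, hB, hC] at hsplit
      rw [hsplit]
      linarith [k1, k2, k3, hEE]

theorem total_area (n : ℕ) (hn : 1 ≤ n) :
    ((∑ᶠ w ∈ {w : List ℕ | IsCatalanWord w ∧ w.length = n}, w.sum : ℕ) : ℚ) =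
      (1 / 2) * ((4 : ℚ) ^ n - ((2 * n).choose n : ℚ)) := by
  have hset : {w : List ℕ | IsCatalanWord w ∧ w.length = n} = ↑(catW n) := by
    ext w
    simp only [Set.mem_setOf_eq, Finset.mem_coe, mem_catW, isCat_iff]
  rw [hset, finsum_mem_coe_finset]
  have hF : (∑ w ∈ catW n, w.sum) = Fc n := rfl
  rw [hF, Fc_formula n]
  have hb : centralBinom n = (2*n).choose n := rfl
  rw [hb]
  ring
end
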